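/- Let X be a nonempty finite set, K a row-stochastic matrix on X, γ ∈ [0,1), and ρ a probability weight on X. Let d = (1−γ)·∑_{t≥0} γ^t (Kᵀ)^t ρ be the discounted occupancy and assume d(x) ≤ κ·ρ(x) for all x. Then I − γ·K is invertible and for every f : X → ℝ, ∑_x ρ(x)·((I − γ·K)⁻¹ f)(x)² ≤ (κ/(1−γ)²)·∑_x ρ(x)·f(x)², i.e. ‖(I − γ·K)⁻¹ f‖_ρ ≤ (√κ/(1−γ))·‖f‖_ρ. -/

import Mathlib

open Matrix BigOperators Finset Filter

section Aux
variable {X : Type*} [Fintype X] [DecidableEq X]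

lemma aux_pow_entry_nonneg (K : Matrix X X ℝ) (hK0 : ∀ x y, 0 ≤ K x y) :
    ∀ t x y, 0 ≤ (K ^ t) x y := by
  intro t
  induction t with
  | zero =>
      intro x y
      simp only [pow_zero, Matrix.one_apply]
      split <;> norm_num
  | succ t ih =>
      intro x y
      rw [pow_succ, Matrix.mul_apply]
      exact Finset.sum_nonneg fun z _ => mul_nonneg (ih x z) (hK0 z y)

lemma aux_pow_row_sum (K : Matrix X X ℝ) (hK1 : ∀ x, ∑ y, K x y = 1) :
    ∀ t x, ∑ y, (K ^ t) x y = 1 := by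
  intro t
  induction t with
  | zero =>
      intro x
      simp [Matrix.one_apply]
  | succ t ih =>
      intro x
      simp only [pow_succ, Matrix.mul_apply]
      rw [Finset.sum_comm]
      calc ∑ z, ∑ y, (K ^ t) x z * K z y
          = ∑ z, (K ^ t) x z * ∑ y, K z y := by
            simp [Finset.mul_sum]
        _ = 1 := by simp [hK1, ih x]

lemma aux_pow_entry_le_one (K : Matrix X X ℝ) (hK0 : ∀ x y, 0 ≤ K x y)
    (hK1 : ∀ x, ∑ y, K x y = 1) (t : ℕ) (x y : X) : (K ^ t) x y ≤ 1 := by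
  have := Finset.single_le_sum (f := fun z => (K ^ t) x z)
    (fun z _ => aux_pow_entry_nonneg K hK0 t x z) (Finset.mem_univ y)
  rw [aux_pow_row_sum K hK1 t x] at this
  exact this

end Aux

/-- Lemma (Discounted resolvent stability under concentrability): if the
discounted occupancy satisfies `d ≤ κ ρ`, then `I − γK` is invertible and
`‖(I − γK)⁻¹ f‖_ρ ≤ (√κ/(1−γ)) ‖f‖_ρ` for every `f`. -/
theorem stmt_12 {X : Type*} [Fintype X] [Nonempty X] [DecidableEq X]
    (K : Matrix X X ℝ) (hK0 : ∀ x y, 0 ≤ K x y) (hK1 : ∀ x, ∑ y, K x y = 1)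
    (γ : ℝ) (hγ0 : 0 ≤ γ) (hγ1 : γ < 1)
    (ρ : X → ℝ) (hρ0 : ∀ x, 0 ≤ ρ x) (hρ1 : ∑ x, ρ x = 1)
    (κ : ℝ) (d : X → ℝ)
    (hd : ∀ x, d x = (1 - γ) * ∑' t : ℕ, γ ^ t * ((Kᵀ ^ t) *ᵥ ρ) x)
    (hcov : ∀ x, d x ≤ κ * ρ x) :
    IsUnit ((1 : Matrix X X ℝ) - γ • K) ∧
      (∀ f : X → ℝ,
        ∑ x, ρ x * ((((1 : Matrix X X ℝ) - γ • K)⁻¹ *ᵥ f) x) ^ 2 ≤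
          κ / (1 - γ) ^ 2 * ∑ x, ρ x * f x ^ 2) ∧
      (∀ f : X → ℝ,
        Real.sqrt (∑ x, ρ x * ((((1 : Matrix X X ℝ) - γ • K)⁻¹ *ᵥ f) x) ^ 2) ≤
          Real.sqrt κ / (1 - γ) * Real.sqrt (∑ x, ρ x * f x ^ 2)) := by
  have h1γ : (0:ℝ) < 1 - γ := by linarith
  set A : Matrix X X ℝ := (1 : Matrix X X ℝ) - γ • K with hA
  have hKt0 := aux_pow_entry_nonneg K hK0
  have hKt1 := aux_pow_row_sum K hK1
  have hKtle := aux_pow_entry_le_one K hK0 hK1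
  have hgeo : Summable (fun t : ℕ => γ ^ t) := summable_geometric_of_lt_one hγ0 hγ1
  -- summability of entries of the Neumann series
  have hsumE : ∀ x y : X, Summable (fun t : ℕ => γ ^ t * (K ^ t) x y) := by
    intro x y
    refine Summable.of_nonneg_of_le (fun t => ?_) (fun t => ?_) hgeo
    · exact mul_nonneg (pow_nonneg hγ0 t) (hKt0 t x y)
    · calc γ ^ t * (K ^ t) x y ≤ γ ^ t * 1 :=
            mul_le_mul_of_nonneg_left (hKtle t x y) (pow_nonneg hγ0 t)
        _ = γ ^ t := mul_one _
  -- the inverse via Neumann series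
  set M : Matrix X X ℝ := Matrix.of (fun x y => ∑' t : ℕ, γ ^ t * (K ^ t) x y) with hM
  have hMapp : ∀ x y, M x y = ∑' t : ℕ, γ ^ t * (K ^ t) x y := fun x y => rfl
  -- telescoping computation used for both A*M and M*A
  have htel : ∀ (a : ℕ → ℝ), Summable a → ∑' t : ℕ, (a t - a (t+1)) = a 0 := by
    intro a ha
    have ha' : Summable (fun t => a (t+1)) := (summable_nat_add_iff 1).2 ha
    rw [Summable.tsum_sub ha ha']
    have := Summable.tsum_eq_zero_add ha
    linarith [this]
  have hAM : A * M = 1 := by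
    ext x y
    rw [Matrix.mul_apply]
    have hsum : ∀ z, A x z * M z y = ∑' t : ℕ, A x z * (γ ^ t * (K ^ t) z y) := by
      intro z; rw [hMapp, tsum_mul_left]
    calc ∑ z, A x z * M z y
        = ∑ z, ∑' t : ℕ, A x z * (γ ^ t * (K ^ t) z y) := by
          exact Finset.sum_congr rfl fun z _ => hsum z
      _ = ∑' t : ℕ, ∑ z, A x z * (γ ^ t * (K ^ t) z y) := by
          refine (Summable.tsum_finsetSum fun z _ => ?_).symm
          exact (hsumE z y).mul_left _
      _ = ∑' t : ℕ, (γ ^ t * (K ^ t) x y - γ ^ (t+1) * (K ^ (t+1)) x y) := by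
          refine tsum_congr fun t => ?_
          have : ∑ z, A x z * (γ ^ t * (K ^ t) z y)
              = γ ^ t * ((A * (K ^ t)) x y) := by
            rw [Matrix.mul_apply, Finset.mul_sum]
            exact Finset.sum_congr rfl fun z _ => by ring
          rw [this]
          have hAK : A * (K ^ t) = (K ^ t) - γ • (K ^ (t+1)) := by
            rw [hA, Matrix.sub_mul, Matrix.one_mul, Matrix.smul_mul, pow_succ']
          rw [hAK]
          simp only [Matrix.sub_apply, Matrix.smul_apply, smul_eq_mul]
          ring
      _ = γ ^ 0 * (K ^ 0) x y := htel _ (hsumE x y)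
      _ = (1 : Matrix X X ℝ) x y := by simp
  have hMA : M * A = 1 := by
    ext x y
    rw [Matrix.mul_apply]
    have hsum : ∀ z, M x z * A z y = ∑' t : ℕ, (γ ^ t * (K ^ t) x z) * A z y := by
      intro z; rw [hMapp, tsum_mul_right]
    calc ∑ z, M x z * A z y
        = ∑ z, ∑' t : ℕ, (γ ^ t * (K ^ t) x z) * A z y := by
          exact Finset.sum_congr rfl fun z _ => hsum z
      _ = ∑' t : ℕ, ∑ z, (γ ^ t * (K ^ t) x z) * A z y := by
          refine (Summable.tsum_finsetSum fun z _ => ?_).symm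
          exact (hsumE x z).mul_right _
      _ = ∑' t : ℕ, (γ ^ t * (K ^ t) x y - γ ^ (t+1) * (K ^ (t+1)) x y) := by
          refine tsum_congr fun t => ?_
          have : ∑ z, (γ ^ t * (K ^ t) x z) * A z y
              = γ ^ t * (((K ^ t) * A) x y) := by
            rw [Matrix.mul_apply, Finset.mul_sum]
            exact Finset.sum_congr rfl fun z _ => by ring
          rw [this]
          have hAK : (K ^ t) * A = (K ^ t) - γ • (K ^ (t+1)) := by
            rw [hA, Matrix.mul_sub, Matrix.mul_one, Matrix.mul_smul, pow_succ]
          rw [hAK]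
          simp only [Matrix.sub_apply, Matrix.smul_apply, smul_eq_mul]
          ring
      _ = γ ^ 0 * (K ^ 0) x y := htel _ (hsumE x y)
      _ = (1 : Matrix X X ℝ) x y := by simp
  have hUnit : IsUnit A := ⟨⟨A, M, hAM, hMA⟩, rfl⟩
  have hInv : A⁻¹ = M := Matrix.inv_eq_right_inv hAM
  -- occupancy weights
  set w : ℕ → X → ℝ := fun t y => ((Kᵀ ^ t) *ᵥ ρ) y with hw
  have hwval : ∀ t y, w t y = ∑ x, (K ^ t) x y * ρ x := by
    intro t y
    rw [hw]
    simp only [← Matrix.transpose_pow]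
    rw [Matrix.mulVec, dotProduct]
    exact Finset.sum_congr rfl fun x _ => by rw [Matrix.transpose_apply]
  have hw0 : ∀ t y, 0 ≤ w t y := by
    intro t y; rw [hwval]
    exact Finset.sum_nonneg fun x _ => mul_nonneg (hKt0 t x y) (hρ0 x)
  have hwle : ∀ t y, w t y ≤ 1 := by
    intro t y; rw [hwval, ← hρ1]
    exact Finset.sum_le_sum fun x _ => by
      calc (K ^ t) x y * ρ x ≤ 1 * ρ x :=
        mul_le_mul_of_nonneg_right (hKtle t x y) (hρ0 x)
      _ = ρ x := one_mul _
  have hsumw : ∀ y, Summable (fun t : ℕ => γ ^ t * w t y) := by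
    intro y
    refine Summable.of_nonneg_of_le (fun t => mul_nonneg (pow_nonneg hγ0 t) (hw0 t y))
      (fun t => ?_) hgeo
    calc γ ^ t * w t y ≤ γ ^ t * 1 :=
          mul_le_mul_of_nonneg_left (hwle t y) (pow_nonneg hγ0 t)
      _ = γ ^ t := mul_one _
  have hdsum : ∀ y, ∑' t : ℕ, γ ^ t * w t y ≤ κ * ρ y / (1 - γ) := by
    intro y
    have := hcov y
    rw [hd y] at this
    rw [le_div_iff₀ h1γ]
    calc (∑' t : ℕ, γ ^ t * w t y) * (1 - γ) = (1 - γ) * ∑' t : ℕ, γ ^ t * w t y := by ring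
      _ ≤ κ * ρ y := this
  -- κ positivity
  have hκ0 : 0 ≤ κ := by
    obtain ⟨x0, hx0⟩ : ∃ x, 0 < ρ x := by
      by_contra h
      push_neg at h
      have : ∀ x, ρ x = 0 := fun x => le_antisymm (h x) (hρ0 x)
      simp [this] at hρ1
    have h0term : γ ^ 0 * w 0 x0 ≤ ∑' t : ℕ, γ ^ t * w t x0 :=
      Summable.le_tsum (hsumw x0) 0 (fun j _ => mul_nonneg (pow_nonneg hγ0 j) (hw0 j x0))
    have hw00 : w 0 x0 = ρ x0 := by rw [hwval]; simp [Matrix.one_apply]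
    have : (1 - γ) * ρ x0 ≤ κ * ρ x0 := by
      have h2 := hdsum x0
      have h3 : ρ x0 ≤ κ * ρ x0 / (1 - γ) := by
        calc ρ x0 = γ ^ 0 * w 0 x0 := by rw [hw00]; ring
          _ ≤ ∑' t : ℕ, γ ^ t * w t x0 := h0term
          _ ≤ κ * ρ x0 / (1 - γ) := h2
      rw [le_div_iff₀ h1γ] at h3
      linarith
    nlinarith
  have hmv : ∀ (B : Matrix X X ℝ) (v : X → ℝ) (x : X), (B *ᵥ v) x = ∑ y, B x y * v y :=
    fun B v x => rfl
  -- the main bound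
  have main : ∀ f : X → ℝ,
      ∑ x, ρ x * ((A⁻¹ *ᵥ f) x) ^ 2 ≤ κ / (1 - γ) ^ 2 * ∑ x, ρ x * f x ^ 2 := by
    intro f
    -- summability of the vector series
    have hsumV : ∀ x, Summable (fun t : ℕ => γ ^ t * ((K ^ t) *ᵥ f) x) := by
      intro x
      have : (fun t : ℕ => γ ^ t * ((K ^ t) *ᵥ f) x)
          = fun t => ∑ y, (γ ^ t * (K ^ t) x y) * f y := by
        funext t
        rw [Matrix.mulVec, dotProduct, Finset.mul_sum]
        exact Finset.sum_congr rfl fun y _ => by ring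
      rw [this]
      exact summable_sum fun y _ => (hsumE x y).mul_right (f y)
    -- identify A⁻¹ *ᵥ f
    have hginv : ∀ x, (A⁻¹ *ᵥ f) x = ∑' t : ℕ, γ ^ t * ((K ^ t) *ᵥ f) x := by
      intro x
      rw [hInv, Matrix.mulVec, dotProduct]
      calc ∑ y, M x y * f y
          = ∑ y, ∑' t : ℕ, (γ ^ t * (K ^ t) x y) * f y := by
            exact Finset.sum_congr rfl fun y _ => by rw [hMapp, tsum_mul_right]
        _ = ∑' t : ℕ, ∑ y, (γ ^ t * (K ^ t) x y) * f y := by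
            refine (Summable.tsum_finsetSum fun y _ => ?_).symm
            exact (hsumE x y).mul_right _
        _ = ∑' t : ℕ, γ ^ t * ((K ^ t) *ᵥ f) x := by
            refine tsum_congr fun t => ?_
            rw [Matrix.mulVec, dotProduct, Finset.mul_sum]
            exact Finset.sum_congr rfl fun y _ => by ring
    -- partial sums
    set S : ℕ → X → ℝ := fun N x => ∑ t ∈ Finset.range N, γ ^ t * ((K ^ t) *ᵥ f) x with hS
    have hSlim : ∀ x, Tendsto (fun N => S N x) atTop (nhds ((A⁻¹ *ᵥ f) x)) := by
      intro x
      rw [hginv x]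
      exact (hsumV x).hasSum.tendsto_sum_nat
    -- finite-N bound
    have hbound : ∀ N, ∑ x, ρ x * (S N x) ^ 2 ≤ κ / (1 - γ) ^ 2 * ∑ x, ρ x * f x ^ 2 := by
      intro N
      -- Cauchy–Schwarz in t
      have hCS1 : ∀ x, (S N x) ^ 2 ≤
          (1 - γ)⁻¹ * ∑ t ∈ Finset.range N, γ ^ t * (((K ^ t) *ᵥ f) x) ^ 2 := by
        intro x
        have h1 : (S N x) ^ 2 ≤ (∑ t ∈ Finset.range N, γ ^ t) *
            ∑ t ∈ Finset.range N, γ ^ t * (((K ^ t) *ᵥ f) x) ^ 2 := by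
          have := Finset.sum_mul_sq_le_sq_mul_sq (Finset.range N)
            (fun t => Real.sqrt (γ ^ t))
            (fun t => Real.sqrt (γ ^ t) * ((K ^ t) *ᵥ f) x)
          have e1 : ∀ t, Real.sqrt (γ ^ t) * (Real.sqrt (γ ^ t) * ((K ^ t) *ᵥ f) x)
              = γ ^ t * ((K ^ t) *ᵥ f) x := by
            intro t
            rw [← mul_assoc, Real.mul_self_sqrt (pow_nonneg hγ0 t)]
          have e2 : ∀ t, (Real.sqrt (γ ^ t)) ^ 2 = γ ^ t := fun t =>
            Real.sq_sqrt (pow_nonneg hγ0 t)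
          have e3 : ∀ t, (Real.sqrt (γ ^ t) * ((K ^ t) *ᵥ f) x) ^ 2
              = γ ^ t * (((K ^ t) *ᵥ f) x) ^ 2 := by
            intro t; rw [mul_pow, e2]
          simp only [e1, e2, e3] at this
          exact this
        have h2 : ∑ t ∈ Finset.range N, γ ^ t ≤ (1 - γ)⁻¹ := by
          calc ∑ t ∈ Finset.range N, γ ^ t ≤ ∑' t : ℕ, γ ^ t :=
                Summable.sum_le_tsum _ (fun t _ => pow_nonneg hγ0 t) hgeo
            _ = (1 - γ)⁻¹ := tsum_geometric_of_lt_one hγ0 hγ1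
        refine h1.trans (mul_le_mul_of_nonneg_right h2 ?_)
        exact Finset.sum_nonneg fun t _ =>
          mul_nonneg (pow_nonneg hγ0 t) (sq_nonneg _)
      -- Jensen in y
      have hCS2 : ∀ (t : ℕ) (x : X), (((K ^ t) *ᵥ f) x) ^ 2 ≤
          ((K ^ t) *ᵥ (fun y => f y ^ 2)) x := by
        intro t x
        have := Finset.sum_mul_sq_le_sq_mul_sq (Finset.univ : Finset X)
          (fun y => Real.sqrt ((K ^ t) x y))
          (fun y => Real.sqrt ((K ^ t) x y) * f y)
        have e1 : ∀ y, Real.sqrt ((K ^ t) x y) * (Real.sqrt ((K ^ t) x y) * f y)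
            = (K ^ t) x y * f y := by
          intro y; rw [← mul_assoc, Real.mul_self_sqrt (hKt0 t x y)]
        have e2 : ∀ y, (Real.sqrt ((K ^ t) x y)) ^ 2 = (K ^ t) x y := fun y =>
          Real.sq_sqrt (hKt0 t x y)
        have e3 : ∀ y, (Real.sqrt ((K ^ t) x y) * f y) ^ 2
            = (K ^ t) x y * f y ^ 2 := by
          intro y; rw [mul_pow, e2]
        simp only [e1, e2, e3] at this
        rw [hKt1 t x, one_mul] at this
        calc (((K ^ t) *ᵥ f) x) ^ 2 = (∑ y, (K ^ t) x y * f y) ^ 2 := by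
              rw [Matrix.mulVec, dotProduct]
          _ ≤ ∑ y, (K ^ t) x y * f y ^ 2 := this
          _ = ((K ^ t) *ᵥ (fun y => f y ^ 2)) x := by
              rw [Matrix.mulVec, dotProduct]
      calc ∑ x, ρ x * (S N x) ^ 2
          ≤ ∑ x, ρ x * ((1 - γ)⁻¹ *
              ∑ t ∈ Finset.range N, γ ^ t * (((K ^ t) *ᵥ f) x) ^ 2) :=
            Finset.sum_le_sum fun x _ =>
              mul_le_mul_of_nonneg_left (hCS1 x) (hρ0 x)
        _ ≤ ∑ x, ρ x * ((1 - γ)⁻¹ *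
              ∑ t ∈ Finset.range N, γ ^ t * ((K ^ t) *ᵥ (fun y => f y ^ 2)) x) := by
            refine Finset.sum_le_sum fun x _ => ?_
            refine mul_le_mul_of_nonneg_left ?_ (hρ0 x)
            refine mul_le_mul_of_nonneg_left ?_ (by positivity)
            exact Finset.sum_le_sum fun t _ =>
              mul_le_mul_of_nonneg_left (hCS2 t x) (pow_nonneg hγ0 t)
        _ = (1 - γ)⁻¹ * ∑ t ∈ Finset.range N, γ ^ t *
              ∑ x, ρ x * ((K ^ t) *ᵥ (fun y => f y ^ 2)) x := by
            simp only [Finset.mul_sum]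
            rw [Finset.sum_comm]
            exact Finset.sum_congr rfl fun t _ =>
              Finset.sum_congr rfl fun x _ => by ring
        _ = (1 - γ)⁻¹ * ∑ t ∈ Finset.range N, γ ^ t * ∑ y, w t y * f y ^ 2 := by
            refine congrArg _ (Finset.sum_congr rfl fun t _ => congrArg _ ?_)
            simp only [hmv, hwval, Finset.mul_sum, Finset.sum_mul]
            rw [Finset.sum_comm]
            exact Finset.sum_congr rfl fun y _ =>
              Finset.sum_congr rfl fun x _ => by ring
        _ = (1 - γ)⁻¹ * ∑ y, (∑ t ∈ Finset.range N, γ ^ t * w t y) * f y ^ 2 := by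
            refine congrArg _ ?_
            simp only [Finset.mul_sum, Finset.sum_mul]
            rw [Finset.sum_comm]
            exact Finset.sum_congr rfl fun t _ =>
              Finset.sum_congr rfl fun y _ => by ring
        _ ≤ (1 - γ)⁻¹ * ∑ y, (κ * ρ y / (1 - γ)) * f y ^ 2 := by
            refine mul_le_mul_of_nonneg_left ?_ (by positivity)
            refine Finset.sum_le_sum fun y _ => ?_
            refine mul_le_mul_of_nonneg_right ?_ (sq_nonneg _)
            calc ∑ t ∈ Finset.range N, γ ^ t * w t y
                ≤ ∑' t : ℕ, γ ^ t * w t y :=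
                  Summable.sum_le_tsum _ (fun t _ =>
                    mul_nonneg (pow_nonneg hγ0 t) (hw0 t y)) (hsumw y)
              _ ≤ κ * ρ y / (1 - γ) := hdsum y
        _ = κ / (1 - γ) ^ 2 * ∑ x, ρ x * f x ^ 2 := by
            rw [Finset.mul_sum, Finset.mul_sum]
            refine Finset.sum_congr rfl fun x _ => ?_
            field_simp
    -- pass to the limit
    have hlim : Tendsto (fun N => ∑ x, ρ x * (S N x) ^ 2) atTop
        (nhds (∑ x, ρ x * ((A⁻¹ *ᵥ f) x) ^ 2)) := by
      refine tendsto_finset_sum _ fun x _ => ?_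
      exact (((hSlim x).pow 2).const_mul (ρ x))
    exact le_of_tendsto' hlim hbound
  refine ⟨hUnit, main, ?_⟩
  intro f
  have h := main f
  have hR0 : 0 ≤ ∑ x, ρ x * f x ^ 2 :=
    Finset.sum_nonneg fun x _ => mul_nonneg (hρ0 x) (sq_nonneg _)
  calc Real.sqrt (∑ x, ρ x * ((A⁻¹ *ᵥ f) x) ^ 2)
      ≤ Real.sqrt (κ / (1 - γ) ^ 2 * ∑ x, ρ x * f x ^ 2) := Real.sqrt_le_sqrt h
    _ = Real.sqrt (κ / (1 - γ) ^ 2) * Real.sqrt (∑ x, ρ x * f x ^ 2) :=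
        Real.sqrt_mul (by positivity) _
    _ = Real.sqrt κ / (1 - γ) * Real.sqrt (∑ x, ρ x * f x ^ 2) := by
        rw [Real.sqrt_div hκ0, Real.sqrt_sq h1γ.le]
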